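/- For every natural number n ≥ 3, the number of open sets of the star topology on the cycle complex C_n equals the Lucas number L(2n) = fib(2n−1) + fib(2n+1); equivalently, the number of subsets A of C_n that are up-sets (x ∈ A, y ∈ C_n, x ⊆ y implies y ∈ A) is fib(2n−1) + fib(2n+1), where fib is the Fibonacci sequence. -/

import Mathlib

set_option linter.unusedSectionVars false

/-- The cycle complex `C_n` on `ZMod n`: simplices are the singletons `{i}`
and the edges `{i, i+1}`. -/
def cycleComplex (n : ℕ) [NeZero n] : Finset (Finset (ZMod n)) :=
  (Finset.univ.image fun i : ZMod n => ({i} : Finset (ZMod n))) ∪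
    (Finset.univ.image fun i : ZMod n => ({i, i + 1} : Finset (ZMod n)))


namespace Stmt19

def W (a b : Bool) : ℕ := if a && b then 2 else 1

def pw : Bool → List Bool → Bool → ℕ
  | a, [], b => W a b
  | a, c :: l, b => W a c * pw c l b

def g : ℕ → Bool → Bool → ℕ
  | 0, a, b => W a b
  | k+1, a, b => ∑ c : Bool, W a c * g k c b

lemma pw_append (a b c : Bool) (l : List Bool) :
    pw a (l ++ [c]) b = pw a l c * W c b := by
  induction l generalizing a with
  | nil => simp [pw]
  | cons d l ih => simp [pw, ih, mul_assoc]

lemma sum_pw (k : ℕ) (a b : Bool) :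
    ∑ t : Fin k → Bool, pw a (List.ofFn t) b = g k a b := by
  induction k generalizing a with
  | zero => simp [pw, g, List.ofFn_zero]
  | succ m ih =>
    rw [← Fintype.sum_equiv (Fin.consEquiv (fun _ => Bool))
      (fun q : Bool × (Fin m → Bool) => pw a (List.ofFn ((Fin.consEquiv _) q)) b)
      (fun t => pw a (List.ofFn t) b) (fun q => rfl)]
    rw [Fintype.sum_prod_type]
    simp only [Fin.consEquiv_apply, List.ofFn_succ, Fin.cons_zero, Fin.cons_succ, pw]
    rw [g]
    refine Finset.sum_congr rfl fun c _ => ?_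
    rw [← Finset.mul_sum, ih]

lemma g_rec (k : ℕ) (a b : Bool) :
    g (k+2) a b + g k a b = 3 * g (k+1) a b := by
  induction k generalizing a with
  | zero => revert a b; decide
  | succ m ih =>
    show (∑ c : Bool, W a c * g (m+2) c b) + ∑ c : Bool, W a c * g m c b
        = 3 * ∑ c : Bool, W a c * g (m+1) c b
    rw [← Finset.sum_add_distrib, Finset.mul_sum]
    refine Finset.sum_congr rfl fun c _ => ?_
    rw [← mul_add, ih c, mul_left_comm]

lemma trace_fib (k : ℕ) :
    g k false false + g k true true = Nat.fib (2*k+1) + Nat.fib (2*k+3) := by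
  induction k using Nat.strong_induction_on with
  | _ k ih =>
    match k with
    | 0 => decide
    | 1 => decide
    | (m+2) =>
      have h1 := ih m (by omega)
      have h2 := ih (m+1) (by omega)
      have h3 := g_rec m false false
      have h4 := g_rec m true true
      set x := 2*m+1 with hx
      have e1 : 2*(m+2)+1 = x+4 := by omega
      have e2 : 2*(m+2)+3 = x+6 := by omega
      have e3 : 2*(m+1)+1 = x+2 := by omega
      have e4 : 2*(m+1)+3 = x+4 := by omega
      have e5 : 2*m+3 = x+2 := by omega
      rw [e1, e2]
      rw [e3, e4] at h2
      rw [e5] at h1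
      have F2 : Nat.fib (x+2) = Nat.fib x + Nat.fib (x+1) := Nat.fib_add_two
      have F3 : Nat.fib (x+3) = Nat.fib (x+1) + Nat.fib (x+2) := by
        have h := Nat.fib_add_two (n := x+1); simpa [show x+1+2 = x+3 by omega, show x+1+1 = x+2 by omega] using h
      have F4 : Nat.fib (x+4) = Nat.fib (x+2) + Nat.fib (x+3) := by
        have h := Nat.fib_add_two (n := x+2); simpa [show x+2+2 = x+4 by omega, show x+2+1 = x+3 by omega] using h
      have F5 : Nat.fib (x+5) = Nat.fib (x+3) + Nat.fib (x+4) := by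
        have h := Nat.fib_add_two (n := x+3); simpa [show x+3+2 = x+5 by omega, show x+3+1 = x+4 by omega] using h
      have F6 : Nat.fib (x+6) = Nat.fib (x+4) + Nat.fib (x+5) := by
        have h := Nat.fib_add_two (n := x+4); simpa [show x+4+2 = x+6 by omega, show x+4+1 = x+5 by omega] using h
      omega

end Stmt19

namespace Stmt19

lemma range_map_eq_ofFn (m : ℕ) (f : ℕ → Bool) :
    (List.range m).map f = List.ofFn (fun i : Fin m => f i) := by
  rw [List.ofFn_eq_map, ← List.map_coe_finRange_eq_range, List.map_map]
  rfl

lemma prod_range_pw (v : ℕ → Bool) (m : ℕ) :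
    ∏ j ∈ Finset.range (m+1), W (v j) (v (j+1))
      = pw (v 0) ((List.range m).map fun j => v (j+1)) (v (m+1)) := by
  induction m with
  | zero => simp [pw]
  | succ k ih =>
    rw [Finset.prod_range_succ, ih, List.range_succ, List.map_append, List.map_singleton,
      pw_append]

def zfe (m : ℕ) : ZMod (m+1) ≃ Fin (m+1) where
  toFun i := ⟨i.val, ZMod.val_lt i⟩
  invFun j := ((j.val : ℕ) : ZMod (m+1))
  left_inv i := ZMod.natCast_rightInverse i
  right_inv j := by
    ext
    simp [ZMod.val_natCast, Nat.mod_eq_of_lt j.isLt]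

lemma sum_cyc (m : ℕ) :
    ∑ e : ZMod (m+1) → Bool, ∏ i : ZMod (m+1), W (e i) (e (i+1)) = ∑ a : Bool, g m a a := by
  have key : ∀ e : ZMod (m+1) → Bool,
      ∏ i : ZMod (m+1), W (e i) (e (i+1))
        = pw (e ((0:ℕ) : ZMod (m+1)))
            (List.ofFn fun i : Fin m => e ((i.val + 1 : ℕ) : ZMod (m+1)))
            (e ((0:ℕ) : ZMod (m+1))) := by
    intro e
    set v : ℕ → Bool := fun j => e ((j : ℕ) : ZMod (m+1)) with hv
    have h1 : ∏ i : ZMod (m+1), W (e i) (e (i+1))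
        = ∏ j : Fin (m+1), W (v j.val) (v (j.val+1)) := by
      refine Fintype.prod_equiv (zfe m) _ _ fun i => ?_
      simp only [hv]
      have h0 : ((i.val : ℕ) : ZMod (m+1)) = i := ZMod.natCast_rightInverse i
      have h1 : (((zfe m) i).val : ℕ) = i.val := rfl
      rw [h1]
      push_cast
      rw [h0]
    rw [h1, Fin.prod_univ_eq_prod_range (fun j => W (v j) (v (j+1))), prod_range_pw]
    have hvm : v (m+1) = v 0 := by simp [hv, ZMod.natCast_self]
    rw [hvm, range_map_eq_ofFn]
  calc ∑ e : ZMod (m+1) → Bool, ∏ i : ZMod (m+1), W (e i) (e (i+1))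
      = ∑ u : Fin (m+1) → Bool, pw (u 0) (List.ofFn fun i : Fin m => u i.succ) (u 0) := by
        refine Fintype.sum_equiv (Equiv.arrowCongr (zfe m) (Equiv.refl Bool)) _ _ fun e => ?_
        rw [key e]
        rfl
    _ = ∑ q : Bool × (Fin m → Bool), pw q.1 (List.ofFn q.2) q.1 := by
        refine (Fintype.sum_equiv (Fin.consEquiv fun _ => Bool) _ _ fun q => ?_).symm
        simp [Fin.consEquiv, Fin.cons_zero, Fin.cons_succ]
    _ = ∑ a : Bool, g m a a := by
        rw [Fintype.sum_prod_type]
        exact Finset.sum_congr rfl fun a _ => sum_pw m a a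

end Stmt19

namespace Stmt19

open Finset

variable {n : ℕ} [NeZero n]

lemma one_ne (hn : 3 ≤ n) : (1 : ZMod n) ≠ 0 := by
  have : ((1:ℕ) : ZMod n) ≠ 0 := by
    rw [Ne, ZMod.natCast_eq_zero_iff]
    intro h; have := Nat.le_of_dvd one_pos h; omega
  simpa using this

lemma two_ne (hn : 3 ≤ n) : (2 : ZMod n) ≠ 0 := by
  have : ((2:ℕ) : ZMod n) ≠ 0 := by
    rw [Ne, ZMod.natCast_eq_zero_iff]
    intro h; have := Nat.le_of_dvd two_pos h; omega
  simpa using this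

lemma self_ne_succ (hn : 3 ≤ n) (i : ZMod n) : i ≠ i + 1 := by
  intro h
  exact one_ne hn (left_eq_add.mp h)

lemma sing_ne_edge (hn : 3 ≤ n) (i j : ZMod n) :
    ({i} : Finset (ZMod n)) ≠ {j, j + 1} := by
  intro h
  apply_fun Finset.card at h
  rw [Finset.card_singleton, Finset.card_insert_of_notMem (by
    simp [self_ne_succ hn j]), Finset.card_singleton] at h
  omega

lemma edge_inj (hn : 3 ≤ n) {i j : ZMod n}
    (h : ({i, i+1} : Finset (ZMod n)) = {j, j+1}) : i = j := by
  have hi : i = j ∨ i = j + 1 := by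
    have : i ∈ ({j, j+1} : Finset (ZMod n)) := h ▸ (Finset.mem_insert_self i {i+1})
    simpa using this
  have hj : j = i ∨ j = i + 1 := by
    have : j ∈ ({i, i+1} : Finset (ZMod n)) := h.symm ▸ (Finset.mem_insert_self j {j+1})
    simpa using this
  rcases hi with hi | hi
  · exact hi
  rcases hj with hj | hj
  · exact hj.symm
  · exfalso
    rw [hj, add_assoc] at hi
    have h2 : (1:ZMod n) + 1 = 0 := left_eq_add.mp hi
    rw [one_add_one_eq_two] at h2
    exact two_ne hn h2

lemma mem_cycleComplex {y : Finset (ZMod n)} :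
    y ∈ cycleComplex n ↔ (∃ i, y = {i}) ∨ ∃ i, y = ({i, i+1} : Finset (ZMod n)) := by
  simp [cycleComplex, eq_comm]

/-- reconstruction of an up-set from boolean data. -/
def recon (p : ZMod n → Bool × Bool) : Finset (Finset (ZMod n)) :=
  ((univ.filter fun i => (p i).2).image fun i => ({i} : Finset (ZMod n))) ∪
    ((univ.filter fun i => (p i).1).image fun i => ({i, i+1} : Finset (ZMod n)))

lemma mem_recon_sing (hn : 3 ≤ n) (p : ZMod n → Bool × Bool) (i : ZMod n) :
    ({i} : Finset (ZMod n)) ∈ recon p ↔ (p i).2 = true := by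
  simp only [recon, Finset.mem_union, Finset.mem_image, Finset.mem_filter,
    Finset.mem_univ, true_and]
  constructor
  · rintro (⟨j, hj, hji⟩ | ⟨j, hj, hji⟩)
    · exact (Finset.singleton_injective hji) ▸ hj
    · exact absurd hji.symm (sing_ne_edge hn i j)
  · exact fun h => Or.inl ⟨i, h, rfl⟩

lemma mem_recon_edge (hn : 3 ≤ n) (p : ZMod n → Bool × Bool) (i : ZMod n) :
    ({i, i+1} : Finset (ZMod n)) ∈ recon p ↔ (p i).1 = true := by
  simp only [recon, Finset.mem_union, Finset.mem_image, Finset.mem_filter,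
    Finset.mem_univ, true_and]
  constructor
  · rintro (⟨j, hj, hji⟩ | ⟨j, hj, hji⟩)
    · exact absurd hji (sing_ne_edge hn j i)
    · exact (edge_inj hn hji) ▸ hj
  · exact fun h => Or.inr ⟨i, h, rfl⟩

lemma card_eq_card_cond (hn : 3 ≤ n) :
    ((cycleComplex n).powerset.filter
        (fun A => ∀ x ∈ A, ∀ y ∈ cycleComplex n, x ⊆ y → y ∈ A)).card
      = (Finset.univ.filter
          (fun p : ZMod n → Bool × Bool =>
            ∀ i, (p i).2 = true → (p i).1 = true ∧ (p (i-1)).1 = true)).card := by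
  refine Finset.card_bij'
    (fun A _ => fun i => (decide (({i, i+1} : Finset (ZMod n)) ∈ A),
      decide (({i} : Finset (ZMod n)) ∈ A)))
    (fun p _ => recon p) ?_ ?_ ?_ ?_
  · -- forward map lands in target
    intro A hA
    rw [Finset.mem_filter, Finset.mem_powerset] at hA
    obtain ⟨hsub, hup⟩ := hA
    simp only [Finset.mem_filter, Finset.mem_univ, true_and, decide_eq_true_eq]
    intro i hsi
    constructor
    · exact hup _ hsi _ (mem_cycleComplex.mpr (Or.inr ⟨i, rfl⟩))
        (Finset.singleton_subset_iff.mpr (Finset.mem_insert_self i {i+1}))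
    · refine hup _ hsi _ (mem_cycleComplex.mpr (Or.inr ⟨i-1, rfl⟩)) ?_
      rw [Finset.singleton_subset_iff, sub_add_cancel]
      exact Finset.mem_insert_of_mem (Finset.mem_singleton_self i)
  · -- reconstruction lands in source
    intro p hp
    simp only [Finset.mem_filter, Finset.mem_univ, true_and] at hp
    rw [Finset.mem_filter, Finset.mem_powerset]
    constructor
    · refine Finset.union_subset ?_ ?_
      · refine (Finset.image_subset_image (Finset.filter_subset _ _)).trans ?_
        exact Finset.subset_union_left
      · refine (Finset.image_subset_image (Finset.filter_subset _ _)).trans ?_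
        exact Finset.subset_union_right
    · intro x hx y hy hsub
      simp only [recon, Finset.mem_union, Finset.mem_image, Finset.mem_filter,
        Finset.mem_univ, true_and] at hx
      rcases hx with ⟨i, hi, rfl⟩ | ⟨i, hi, rfl⟩
      · -- x = {i}
        obtain ⟨hei, hei'⟩ := hp i hi
        rcases mem_cycleComplex.mp hy with ⟨j, rfl⟩ | ⟨j, rfl⟩
        · have : i = j := by simpa using hsub
          subst this
          exact (mem_recon_sing (n := n) hn p i).mpr hi
        · have : i = j ∨ i = j + 1 := by simpa using hsub
          rcases this with rfl | hij
          · exact (mem_recon_edge hn p i).mpr hei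
          · have hj : j = i - 1 := by rw [hij]; ring
            subst hj
            exact (mem_recon_edge hn p (i-1)).mpr hei'
      · -- x = {i, i+1}
        rcases mem_cycleComplex.mp hy with ⟨j, rfl⟩ | ⟨j, rfl⟩
        · exfalso
          have h1 : i = j := by
            have := hsub (Finset.mem_insert_self i {i+1}); simpa using this
          have h2 : i + 1 = j := by
            have := hsub (Finset.mem_insert_of_mem (Finset.mem_singleton_self (i+1)))
            simpa using this
          exact self_ne_succ hn i (h1.trans h2.symm)
        · have hyx : ({j, j+1} : Finset (ZMod n)) = {i, i+1} := by
            have h1 : i = j ∨ i = j + 1 := by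
              have := hsub (Finset.mem_insert_self i {i+1}); simpa using this
            have h2 : i + 1 = j ∨ i + 1 = j + 1 := by
              have := hsub (Finset.mem_insert_of_mem (Finset.mem_singleton_self (i+1)))
              simpa using this
            rcases h1 with rfl | h1
            · rcases h2 with h2 | h2
              · exact absurd h2.symm (self_ne_succ hn i)
              · rfl
            · exfalso
              rcases h2 with h2 | h2
              · rw [h1, add_assoc] at h2
                have := left_eq_add.mp h2.symm
                rw [one_add_one_eq_two] at this
                exact two_ne hn this
              · have := add_right_cancel h2
                rw [this] at h1
                exact self_ne_succ hn j h1
          rw [hyx]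
          exact (mem_recon_edge hn p i).mpr hi
  · -- left inverse
    intro A hA
    rw [Finset.mem_filter, Finset.mem_powerset] at hA
    obtain ⟨hsub, _⟩ := hA
    ext y
    constructor
    · intro hy
      simp only [recon, Finset.mem_union, Finset.mem_image, Finset.mem_filter,
        Finset.mem_univ, true_and, decide_eq_true_eq] at hy
      rcases hy with ⟨i, hi, rfl⟩ | ⟨i, hi, rfl⟩ <;> exact hi
    · intro hy
      rcases mem_cycleComplex.mp (hsub hy) with ⟨i, rfl⟩ | ⟨i, rfl⟩
      · exact (mem_recon_sing hn _ i).mpr (by simpa using hy)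
      · exact (mem_recon_edge hn _ i).mpr (by simpa using hy)
  · -- right inverse
    intro p hp
    funext i
    refine Prod.ext ?_ ?_
    · simp [mem_recon_edge hn p i]
    · simp [mem_recon_sing hn p i]

end Stmt19


namespace Stmt19

open Finset

lemma card_bool_subtype (P : Prop) [Decidable P] :
    Fintype.card {b : Bool // b = true → P} = if P then 2 else 1 := by
  by_cases h : P
  · rw [if_pos h, Fintype.card_subtype]
    rw [Finset.filter_true_of_mem (fun b _ => fun _ => h)]
    rfl
  · rw [if_neg h, Fintype.card_subtype]
    have : (Finset.univ.filter fun b : Bool => b = true → P) = {false} := by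
      ext b; cases b <;> simp [h]
    rw [this, Finset.card_singleton]

variable {n : ℕ} [NeZero n]

lemma card_cond :
    (Finset.univ.filter
        (fun p : ZMod n → Bool × Bool =>
          ∀ i, (p i).2 = true → (p i).1 = true ∧ (p (i-1)).1 = true)).card
      = ∑ e : ZMod n → Bool, ∏ i : ZMod n, W (e i) (e (i+1)) := by
  rw [← Fintype.card_subtype]
  have e1 : {p : ZMod n → Bool × Bool //
      ∀ i, (p i).2 = true → (p i).1 = true ∧ (p (i-1)).1 = true}
      ≃ {q : (ZMod n → Bool) × (ZMod n → Bool) //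
          ∀ i, q.2 i = true → q.1 i = true ∧ q.1 (i-1) = true} :=
    (Equiv.arrowProdEquivProdArrow (ZMod n) (fun _ => Bool) (fun _ => Bool)).subtypeEquiv (fun p => Iff.rfl)
  have e2 : {q : (ZMod n → Bool) × (ZMod n → Bool) //
      ∀ i, q.2 i = true → q.1 i = true ∧ q.1 (i-1) = true}
      ≃ Σ e : ZMod n → Bool, {s : ZMod n → Bool //
          ∀ i, s i = true → e i = true ∧ e (i-1) = true} :=
    Equiv.subtypeProdEquivSigmaSubtype
      (fun (e : ZMod n → Bool) (s : ZMod n → Bool) =>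
        ∀ i, s i = true → e i = true ∧ e (i-1) = true)
  rw [Fintype.card_congr (e1.trans e2), Fintype.card_sigma]
  refine Finset.sum_congr rfl fun e _ => ?_
  have e3 : {s : ZMod n → Bool // ∀ i, s i = true → e i = true ∧ e (i-1) = true}
      ≃ ∀ i : ZMod n, {b : Bool // b = true → e i = true ∧ e (i-1) = true} :=
    Equiv.subtypePiEquivPi (p := fun i (b : Bool) => b = true → e i = true ∧ e (i-1) = true)
  rw [Fintype.card_congr e3, Fintype.card_pi]
  have h4 : ∀ i : ZMod n,
      Fintype.card {b : Bool // b = true → e i = true ∧ e (i-1) = true}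
        = W (e (i-1)) (e i) := by
    intro i
    rw [card_bool_subtype]
    cases h1 : e i <;> cases h2 : e (i-1) <;> simp [W, h1, h2]
  rw [Finset.prod_congr rfl fun i _ => h4 i]
  refine Fintype.prod_equiv (Equiv.subRight (1 : ZMod n)) _ _ fun i => ?_
  simp only [Equiv.subRight_apply, sub_add_cancel]

end Stmt19


/-- For `n ≥ 3`, the number of open sets of the star topology on the cycle
complex `C_n` — i.e. the number of up-sets of `C_n` — is the Lucas number
`L(2n) = fib(2n-1) + fib(2n+1)`. -/
theorem stmt19 (n : ℕ) (hn : 3 ≤ n) :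
    haveI : NeZero n := ⟨by omega⟩
    ((cycleComplex n).powerset.filter
        (fun A => ∀ x ∈ A, ∀ y ∈ cycleComplex n, x ⊆ y → y ∈ A)).card
      = Nat.fib (2 * n - 1) + Nat.fib (2 * n + 1) := by
  obtain ⟨m, rfl⟩ : ∃ m, n = m + 1 := ⟨n - 1, by omega⟩
  rw [Stmt19.card_eq_card_cond hn, Stmt19.card_cond, Stmt19.sum_cyc m, Fintype.sum_bool]
  have h := Stmt19.trace_fib m
  have e1 : 2*(m+1)-1 = 2*m+1 := by omega
  have e2 : 2*(m+1)+1 = 2*m+3 := by omega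
  rw [e1, e2]
  omega
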